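/- Let p, q ≥ 1 be coprime integers, and let a₀₀₀, a₁₀₀, a₀₁₀, a₀₀₁, a₁ₚq ∈ ℂ be all nonzero. Then the polynomial f(x,y,z) = a₀₀₀ + a₁₀₀·x + a₀₁₀·y + a₀₀₁·z + a₁ₚq·x·yᵖ·z^q has a singular point in (ℂ ∖ {0})³ if and only if (−1)^{1+p+q} · pᵖ · q^q · a₀₀₀^{p+q} · a₁ₚq = (p+q)^{p+q} · a₁₀₀ · a₀₁₀ᵖ · a₀₀₁^q. -/

import Mathlib

open MvPolynomial

noncomputable section

lemma eval_pentatope (P Q : ℕ) (a000 a100 a010 a001 a1pq : ℂ) (z : Fin 3 → ℂ) :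
    (eval z (C a000 + C a100 * X 0 + C a010 * X 1 + C a001 * X 2 +
          C a1pq * (X 0 * X 1 ^ (P+1) * X 2 ^ (Q+1))) =
      a000 + a100 * z 0 + a010 * z 1 + a001 * z 2 + a1pq * z 0 * z 1 ^ (P+1) * z 2 ^ (Q+1))
    ∧ (eval z (pderiv 0 (C a000 + C a100 * X 0 + C a010 * X 1 + C a001 * X 2 +
          C a1pq * (X 0 * X 1 ^ (P+1) * X 2 ^ (Q+1)))) =
      a100 + a1pq * z 1 ^ (P+1) * z 2 ^ (Q+1))
    ∧ (eval z (pderiv 1 (C a000 + C a100 * X 0 + C a010 * X 1 + C a001 * X 2 +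
          C a1pq * (X 0 * X 1 ^ (P+1) * X 2 ^ (Q+1)))) =
      a010 + ((P:ℂ)+1) * a1pq * z 0 * z 1 ^ P * z 2 ^ (Q+1))
    ∧ (eval z (pderiv 2 (C a000 + C a100 * X 0 + C a010 * X 1 + C a001 * X 2 +
          C a1pq * (X 0 * X 1 ^ (P+1) * X 2 ^ (Q+1)))) =
      a001 + ((Q:ℂ)+1) * a1pq * z 0 * z 1 ^ (P+1) * z 2 ^ Q) := by
  refine ⟨?_, ?_, ?_, ?_⟩ <;>
  · simp [pderiv_C_mul, Derivation.leibniz, Derivation.leibniz_pow, pderiv_X, Pi.single_apply]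
    ring

/-- `p` is a singular point of `h` lying in the torus `(ℂ ∖ {0})³`. -/
def SingularAt3 (h : MvPolynomial (Fin 3) ℂ) (p : Fin 3 → ℂ) : Prop :=
  (∀ i, p i ≠ 0) ∧ eval p h = 0 ∧ ∀ i : Fin 3, eval p (pderiv i h) = 0

theorem pentatope_discriminantal_equation
    (p q : ℕ) (hp : 1 ≤ p) (hq : 1 ≤ q) (hpq : Nat.Coprime p q)
    (a000 a100 a010 a001 a1pq : ℂ)
    (h000 : a000 ≠ 0) (h100 : a100 ≠ 0) (h010 : a010 ≠ 0)
    (h001 : a001 ≠ 0) (h1pq : a1pq ≠ 0) :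
    (∃ z : Fin 3 → ℂ,
        SingularAt3 (C a000 + C a100 * X 0 + C a010 * X 1 + C a001 * X 2 +
          C a1pq * (X 0 * X 1 ^ p * X 2 ^ q)) z) ↔
      (-1 : ℂ) ^ (1 + p + q) * (p : ℂ) ^ p * (q : ℂ) ^ q * a000 ^ (p + q) * a1pq =
        ((p : ℂ) + (q : ℂ)) ^ (p + q) * a100 * a010 ^ p * a001 ^ q := by
  obtain ⟨P, rfl⟩ : ∃ P, p = P + 1 := ⟨p - 1, (Nat.succ_pred_eq_of_pos hp).symm⟩
  obtain ⟨Q, rfl⟩ : ∃ Q, q = Q + 1 := ⟨q - 1, (Nat.succ_pred_eq_of_pos hq).symm⟩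
  have hpC : ((P:ℂ)+1) ≠ 0 := by
    have : ((P+1 : ℕ) : ℂ) ≠ 0 := Nat.cast_ne_zero.mpr (Nat.succ_ne_zero P)
    push_cast at this; exact this
  have hqC : ((Q:ℂ)+1) ≠ 0 := by
    have : ((Q+1 : ℕ) : ℂ) ≠ 0 := Nat.cast_ne_zero.mpr (Nat.succ_ne_zero Q)
    push_cast at this; exact this
  have hpqC : ((P:ℂ)+1+((Q:ℂ)+1)) ≠ 0 := by
    have : ((P+1+(Q+1) : ℕ) : ℂ) ≠ 0 := Nat.cast_ne_zero.mpr (by omega)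
    push_cast at this; exact this
  have hSE : (((P:ℂ)+1+((Q:ℂ)+1))^(P+1+(Q+1))) ≠ 0 := pow_ne_zero _ hpqC
  constructor
  · rintro ⟨z, hnz, hf, hd⟩
    obtain ⟨he, he0, he1, he2⟩ := eval_pentatope P Q a000 a100 a010 a001 a1pq z
    rw [he] at hf
    have hd0 := hd 0; rw [he0] at hd0
    have hd1 := hd 1; rw [he1] at hd1
    have hd2 := hd 2; rw [he2] at hd2
    set t : ℂ := a1pq * z 0 * z 1 ^ (P+1) * z 2 ^ (Q+1) with ht
    have ht0 : a100 * z 0 = -t := by linear_combination z 0 * hd0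
    have ht1 : a010 * z 1 = -((P:ℂ)+1) * t := by linear_combination z 1 * hd1
    have ht2 : a001 * z 2 = -((Q:ℂ)+1) * t := by linear_combination z 2 * hd2
    have ha : a000 = ((P:ℂ)+1+((Q:ℂ)+1)) * t := by
      linear_combination hf - ht0 - ht1 - ht2
    clear_value t
    have key2 : ((P:ℂ)+1+((Q:ℂ)+1))^(P+1+(Q+1)) * (a100 * z 0) *
        (a010^(P+1) * z 1^(P+1)) * (a001^(Q+1) * z 2^(Q+1)) =
        ((P:ℂ)+1+((Q:ℂ)+1))^(P+1+(Q+1)) * (-t) *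
        ((-1:ℂ)^(P+1) * ((P:ℂ)+1)^(P+1) * t^(P+1)) *
        ((-1:ℂ)^(Q+1) * ((Q:ℂ)+1)^(Q+1) * t^(Q+1)) := by
      rw [← mul_pow, ← mul_pow, ht0, ht1, ht2, mul_pow (-((P:ℂ)+1)) t,
        mul_pow (-((Q:ℂ)+1)) t, neg_pow ((P:ℂ)+1), neg_pow ((Q:ℂ)+1)]
    push_cast
    rw [ha]
    apply mul_right_cancel₀ (b := z 0 * z 1 ^ (P+1) * z 2 ^ (Q+1))
      (mul_ne_zero (mul_ne_zero (hnz 0) (pow_ne_zero _ (hnz 1))) (pow_ne_zero _ (hnz 2)))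
    rw [mul_pow ((P:ℂ)+1+((Q:ℂ)+1)) t]
    linear_combination (-1 : ℂ) * key2 - ((-1:ℂ)^(1+(P+1)+(Q+1)) * ((P:ℂ)+1)^(P+1) *
      ((Q:ℂ)+1)^(Q+1) * ((P:ℂ)+1+((Q:ℂ)+1))^(P+1+(Q+1)) * t^(P+1+(Q+1))) * ht
  · intro heq
    push_cast at heq
    set T : ℂ := a000 / ((P:ℂ)+1+((Q:ℂ)+1)) with hT
    have hTne : T ≠ 0 := div_ne_zero h000 hpqC
    have hST : ((P:ℂ)+1+((Q:ℂ)+1)) * T = a000 := by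
      rw [hT]; field_simp
    clear_value T
    have hTpow : a000^(P+1+(Q+1)) =
        ((P:ℂ)+1+((Q:ℂ)+1))^(P+1+(Q+1)) * T^(P+1+(Q+1)) := by
      rw [← mul_pow, hST]
    have heq2 : (-1:ℂ)^(1+(P+1)+(Q+1)) * ((P:ℂ)+1)^(P+1) * ((Q:ℂ)+1)^(Q+1) *
        T^(P+1+(Q+1)) * a1pq = a100 * a010^(P+1) * a001^(Q+1) := by
      apply mul_left_cancel₀ hSE
      rw [hTpow] at heq
      linear_combination heq
    set z : Fin 3 → ℂ := ![-T/a100, -((P:ℂ)+1)*T/a010, -((Q:ℂ)+1)*T/a001] with hz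
    have hz0 : z 0 = -T/a100 := rfl
    have hz1 : z 1 = -((P:ℂ)+1)*T/a010 := rfl
    have hz2 : z 2 = -((Q:ℂ)+1)*T/a001 := rfl
    have hnz : ∀ i, z i ≠ 0 := by
      intro i
      fin_cases i
      · simp only [hz0]; exact div_ne_zero (neg_ne_zero.mpr hTne) h100
      · simp only [hz1]; exact div_ne_zero (by exact mul_ne_zero (neg_ne_zero.mpr hpC) hTne) h010
      · simp only [hz2]; exact div_ne_zero (by exact mul_ne_zero (neg_ne_zero.mpr hqC) hTne) h001
    have key : a1pq * z 0 * z 1 ^ (P+1) * z 2 ^ (Q+1) = T := by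
      rw [hz0, hz1, hz2, div_pow, div_pow, mul_pow (-((P:ℂ)+1)) T,
        mul_pow (-((Q:ℂ)+1)) T, neg_pow ((P:ℂ)+1), neg_pow ((Q:ℂ)+1)]
      field_simp
      linear_combination heq2
    refine ⟨z, hnz, ?_, ?_⟩
    · rw [(eval_pentatope P Q a000 a100 a010 a001 a1pq z).1, key, hz0, hz1, hz2]
      have c1 : a100 * (-T / a100) = -T := by
        rw [mul_div_assoc', mul_comm, mul_div_assoc, div_self h100, mul_one]
      have c2 : a010 * (-((P:ℂ)+1) * T / a010) = -((P:ℂ)+1) * T := by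
        rw [mul_div_assoc', mul_comm, mul_div_assoc, div_self h010, mul_one]
      have c3 : a001 * (-((Q:ℂ)+1) * T / a001) = -((Q:ℂ)+1) * T := by
        rw [mul_div_assoc', mul_comm, mul_div_assoc, div_self h001, mul_one]
      rw [c1, c2, c3]
      linear_combination (-1 : ℂ) * hST
    · obtain ⟨he, he0, he1, he2⟩ := eval_pentatope P Q a000 a100 a010 a001 a1pq z
      intro i
      match i with
      | 0 =>
        rw [he0]
        have h : (a100 + a1pq * z 1 ^ (P+1) * z 2 ^ (Q+1)) * z 0 = 0 := by
          have expand : (a100 + a1pq * z 1 ^ (P+1) * z 2 ^ (Q+1)) * z 0 =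
              a100 * z 0 + a1pq * z 0 * z 1 ^ (P+1) * z 2 ^ (Q+1) := by ring
          rw [expand, key, hz0]
          field_simp
          ring
        exact (mul_eq_zero.mp h).resolve_right (hnz 0)
      | 1 =>
        rw [he1]
        have h : (a010 + ((P:ℂ)+1) * a1pq * z 0 * z 1 ^ P * z 2 ^ (Q+1)) * z 1 = 0 := by
          have expand : (a010 + ((P:ℂ)+1) * a1pq * z 0 * z 1 ^ P * z 2 ^ (Q+1)) * z 1 =
              a010 * z 1 + ((P:ℂ)+1) * (a1pq * z 0 * z 1 ^ (P+1) * z 2 ^ (Q+1)) := by ring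
          rw [expand, key, hz1]
          field_simp
          ring
        exact (mul_eq_zero.mp h).resolve_right (hnz 1)
      | 2 =>
        rw [he2]
        have h : (a001 + ((Q:ℂ)+1) * a1pq * z 0 * z 1 ^ (P+1) * z 2 ^ Q) * z 2 = 0 := by
          have expand : (a001 + ((Q:ℂ)+1) * a1pq * z 0 * z 1 ^ (P+1) * z 2 ^ Q) * z 2 =
              a001 * z 2 + ((Q:ℂ)+1) * (a1pq * z 0 * z 1 ^ (P+1) * z 2 ^ (Q+1)) := by ring
          rw [expand, key, hz2]
          field_simp
          ring
        exact (mul_eq_zero.mp h).resolve_right (hnz 2)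

end
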